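/- Let a > 0 and b₁ ≤ b₂ be real numbers, and define lᵢ(n) = logit(1 − Φ(a√n + bᵢ)) for n > 0 and i = 1, 2. Then l₂(n) ≤ l₁(n) for all n > 0, and lim_{n→∞} (l₁(n) − l₂(n))/√n = a·(b₂ − b₁). -/

import Mathlib

open Filter MeasureTheory Set

/-- Standard normal CDF. -/
noncomputable def Phi (x : ℝ) : ℝ :=
  ∫ t in Set.Iio x, (Real.sqrt (2 * Real.pi))⁻¹ * Real.exp (-t ^ 2 / 2)

/-- Standard normal density. -/
noncomputable def stdPdf (x : ℝ) : ℝ := (Real.sqrt (2 * Real.pi))⁻¹ * Real.exp (-x ^ 2 / 2)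

/-- Standard normal quantile function. -/
noncomputable def PhiInv : ℝ → ℝ := Function.invFun Phi

/-- Logit function. -/
noncomputable def logit (x : ℝ) : ℝ := Real.log x - Real.log (1 - x)

open Real Topology


lemma stdPdf_pos (x : ℝ) : 0 < stdPdf x := by unfold stdPdf; positivity

lemma continuous_stdPdf : Continuous stdPdf := by unfold stdPdf; continuity

lemma integrable_stdPdf : Integrable stdPdf := by
  have h := (integrable_exp_neg_mul_sq (by norm_num : (0:ℝ) < 1/2)).const_mul
      (Real.sqrt (2 * Real.pi))⁻¹
  convert h using 2 with x
  unfold stdPdf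
  ring_nf

lemma integral_stdPdf : ∫ x, stdPdf x = 1 := by
  have h : ∫ x : ℝ, (Real.sqrt (2 * Real.pi))⁻¹ * Real.exp (-(1/2) * x ^ 2)
      = (Real.sqrt (2 * Real.pi))⁻¹ * Real.sqrt (Real.pi / (1/2)) := by
    rw [MeasureTheory.integral_const_mul, integral_gaussian]
  have h2 : Real.sqrt (Real.pi / (1/2)) = Real.sqrt (2 * Real.pi) := by norm_num; ring_nf
  rw [h2] at h
  have h3 : ∫ x, stdPdf x = ∫ x : ℝ, (Real.sqrt (2 * Real.pi))⁻¹ * Real.exp (-(1/2) * x ^ 2) := by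
    congr 1; funext x; unfold stdPdf; ring_nf
  rw [h3, h, inv_mul_cancel₀]
  positivity


lemma Phi_eq (x : ℝ) : Phi x = ∫ t in Iio x, stdPdf t := rfl

lemma Phi_mono : Monotone Phi := fun x y hxy => by
  rw [Phi_eq, Phi_eq]
  exact setIntegral_mono_set integrable_stdPdf.integrableOn
    (Eventually.of_forall fun t => (stdPdf_pos t).le)
    (HasSubset.Subset.eventuallyLE (Iio_subset_Iio hxy))

lemma one_sub_Phi (x : ℝ) : 1 - Phi x = ∫ t in Ioi x, stdPdf t := by
  have h : (∫ t in Iic x, stdPdf t) + ∫ t in Ioi x, stdPdf t = ∫ t, stdPdf t :=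
    intervalIntegral.integral_Iic_add_Ioi integrable_stdPdf.integrableOn integrable_stdPdf.integrableOn
  have h2 : Phi x = ∫ t in Iic x, stdPdf t := by
    rw [Phi_eq]; exact setIntegral_congr_set Iio_ae_eq_Iic
  rw [integral_stdPdf] at h
  rw [h2]; linarith

lemma Phi_pos (x : ℝ) : 0 < Phi x := by
  rw [Phi_eq]
  rw [setIntegral_pos_iff_support_of_nonneg_ae
    (Eventually.of_forall fun t => (stdPdf_pos t).le) integrable_stdPdf.integrableOn]
  have : Function.support stdPdf = univ := by
    ext t; simp [Function.mem_support, (stdPdf_pos t).ne']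
  rw [this, univ_inter]
  simp [Real.volume_Iio]

lemma tail_pos (x : ℝ) : 0 < ∫ t in Ioi x, stdPdf t := by
  rw [setIntegral_pos_iff_support_of_nonneg_ae
    (Eventually.of_forall fun t => (stdPdf_pos t).le) integrable_stdPdf.integrableOn]
  have : Function.support stdPdf = univ := by
    ext t; simp [Function.mem_support, (stdPdf_pos t).ne']
  rw [this, univ_inter]
  simp [Real.volume_Ioi]

lemma Phi_lt_one (x : ℝ) : Phi x < 1 := by
  have := tail_pos x
  rw [← one_sub_Phi] at this
  linarith

lemma hasDerivAt_stdPdf (x : ℝ) : HasDerivAt stdPdf (-x * stdPdf x) x := by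
  have h1 : HasDerivAt (fun t : ℝ => -t ^ 2 / 2) (-x) x := by
    have := ((hasDerivAt_pow 2 x).neg).div_const 2
    norm_num at this
    refine this.congr_deriv ?_
    ring
  have h2 := h1.exp
  have h3 := h2.const_mul (Real.sqrt (2 * Real.pi))⁻¹
  refine h3.congr_deriv ?_
  unfold stdPdf; ring

lemma stdPdf_tendsto : Tendsto stdPdf atTop (𝓝 0) := by
  have h0 : Tendsto (fun x : ℝ => x ^ 2 / 2) atTop atTop :=
    (tendsto_pow_atTop two_ne_zero).atTop_div_const (by norm_num)
  have h1 : Tendsto (fun x : ℝ => -x ^ 2 / 2) atTop atBot := by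
    have := tendsto_neg_atBot_iff.mpr h0
    refine this.congr fun x => by ring
  have h2 : Tendsto (fun x : ℝ => Real.exp (-x ^ 2 / 2)) atTop (𝓝 0) :=
    Real.tendsto_exp_atBot.comp h1
  have h3 := h2.const_mul (Real.sqrt (2 * Real.pi))⁻¹
  rw [mul_zero] at h3
  exact h3

lemma tendsto_neg_stdPdf : Tendsto (fun t => -stdPdf t) atTop (𝓝 0) := by
  simpa using stdPdf_tendsto.neg

lemma hderiv_neg_stdPdf : ∀ t : ℝ, HasDerivAt (fun t => -stdPdf t) (t * stdPdf t) t := by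
  intro t
  have := (hasDerivAt_stdPdf t).neg
  refine this.congr_deriv ?_; ring

lemma tail_first_moment {x : ℝ} (hx : 0 < x) :
    ∫ t in Ioi x, t * stdPdf t = stdPdf x := by
  have h := integral_Ioi_of_hasDerivAt_of_nonneg (g := fun t => -stdPdf t)
    (g' := fun t => t * stdPdf t) (a := x) (l := 0)
    (continuous_stdPdf.neg.continuousWithinAt)
    (fun t _ => hderiv_neg_stdPdf t)
    (fun t ht => by have := stdPdf_pos t; have : 0 < t := hx.trans ht; positivity)
    tendsto_neg_stdPdf
  simpa using h

lemma integrableOn_first_moment {x : ℝ} (hx : 0 < x) :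
    IntegrableOn (fun t => t * stdPdf t) (Ioi x) := by
  exact integrableOn_Ioi_deriv_of_nonneg (continuous_stdPdf.neg.continuousWithinAt)
    (fun t _ => hderiv_neg_stdPdf t)
    (fun t ht => by have := stdPdf_pos t; have : 0 < t := hx.trans ht; positivity)
    tendsto_neg_stdPdf

lemma tail_ub {x : ℝ} (hx : 0 < x) : 1 - Phi x ≤ stdPdf x / x := by
  rw [one_sub_Phi]
  have hmono : ∫ t in Ioi x, stdPdf t ≤ ∫ t in Ioi x, x⁻¹ * (t * stdPdf t) := by
    refine setIntegral_mono_on integrable_stdPdf.integrableOn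
      ((integrableOn_first_moment hx).const_mul x⁻¹) measurableSet_Ioi fun t ht => ?_
    have htx : x ≤ t := le_of_lt ht
    have h1 : (1:ℝ) ≤ x⁻¹ * t := by
      rw [inv_mul_eq_div, le_div_iff₀ hx]; linarith
    nlinarith [stdPdf_pos t]
  calc ∫ t in Ioi x, stdPdf t ≤ ∫ t in Ioi x, x⁻¹ * (t * stdPdf t) := hmono
    _ = x⁻¹ * ∫ t in Ioi x, t * stdPdf t := integral_const_mul _ _
    _ = stdPdf x / x := by rw [tail_first_moment hx]; ring

lemma hderiv_neg_ratio {t : ℝ} (ht : 0 < t) :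
    HasDerivAt (fun t => -(stdPdf t / t)) (stdPdf t * (1 + 1 / t ^ 2)) t := by
  have h := ((hasDerivAt_stdPdf t).div (hasDerivAt_id t) ht.ne').neg
  refine h.congr_deriv ?_
  simp only [id]
  field_simp
  ring

lemma tendsto_neg_ratio : Tendsto (fun t : ℝ => -(stdPdf t / t)) atTop (𝓝 0) := by
  have h : Tendsto (fun t : ℝ => stdPdf t / t) atTop (𝓝 0) := by
    have := stdPdf_tendsto.mul tendsto_inv_atTop_zero
    simpa [div_eq_mul_inv] using this
  simpa using h.neg

lemma tail_ratio_int {x : ℝ} (hx : 0 < x) :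
    ∫ t in Ioi x, stdPdf t * (1 + 1 / t ^ 2) = stdPdf x / x := by
  have h := integral_Ioi_of_hasDerivAt_of_nonneg (g := fun t => -(stdPdf t / t))
    (g' := fun t => stdPdf t * (1 + 1 / t ^ 2)) (a := x) (l := 0)
    ((continuous_stdPdf.continuousAt.div continuousAt_id hx.ne').neg.continuousWithinAt)
    (fun t ht => hderiv_neg_ratio (hx.trans ht))
    (fun t ht => by have := stdPdf_pos t; have h0 : 0 < t := hx.trans ht; positivity)
    tendsto_neg_ratio
  simpa using h

lemma tail_ratio_integrable {x : ℝ} (hx : 0 < x) :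
    IntegrableOn (fun t => stdPdf t * (1 + 1 / t ^ 2)) (Ioi x) :=
  integrableOn_Ioi_deriv_of_nonneg
    ((continuous_stdPdf.continuousAt.div continuousAt_id hx.ne').neg.continuousWithinAt)
    (fun t ht => hderiv_neg_ratio (hx.trans ht))
    (fun t ht => by have := stdPdf_pos t; have h0 : 0 < t := hx.trans ht; positivity)
    tendsto_neg_ratio

lemma tail_lb {x : ℝ} (hx : 0 < x) : x * stdPdf x / (x ^ 2 + 1) ≤ 1 - Phi x := by
  rw [one_sub_Phi]
  have hmono : ∫ t in Ioi x, x ^ 2 / (x ^ 2 + 1) * (stdPdf t * (1 + 1 / t ^ 2))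
      ≤ ∫ t in Ioi x, stdPdf t := by
    refine setIntegral_mono_on ((tail_ratio_integrable hx).const_mul _)
      integrable_stdPdf.integrableOn measurableSet_Ioi fun t ht => ?_
    have htx : x ≤ t := le_of_lt ht
    have ht0 : 0 < t := hx.trans_le htx
    have h1 : 1 / t ^ 2 ≤ 1 / x ^ 2 := by
      apply one_div_le_one_div_of_le (by positivity)
      nlinarith
    have hkey : x ^ 2 / (x ^ 2 + 1) * (1 + 1 / t ^ 2) ≤ 1 := by
      rw [div_mul_eq_mul_div, div_le_one (by positivity)]
      have : x ^ 2 * (1 + 1 / t ^ 2) ≤ x ^ 2 * (1 + 1 / x ^ 2) := by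
        apply mul_le_mul_of_nonneg_left (by linarith) (by positivity)
      have h2 : x ^ 2 * (1 + 1 / x ^ 2) = x ^ 2 + 1 := by field_simp
      linarith
    calc x ^ 2 / (x ^ 2 + 1) * (stdPdf t * (1 + 1 / t ^ 2))
        = (x ^ 2 / (x ^ 2 + 1) * (1 + 1 / t ^ 2)) * stdPdf t := by ring
      _ ≤ 1 * stdPdf t := by
          apply mul_le_mul_of_nonneg_right hkey (stdPdf_pos t).le
      _ = stdPdf t := one_mul _
  have heval : ∫ t in Ioi x, x ^ 2 / (x ^ 2 + 1) * (stdPdf t * (1 + 1 / t ^ 2))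
      = x ^ 2 / (x ^ 2 + 1) * (stdPdf x / x) := by
    rw [integral_const_mul, tail_ratio_int hx]
  have : x ^ 2 / (x ^ 2 + 1) * (stdPdf x / x) = x * stdPdf x / (x ^ 2 + 1) := by
    field_simp
  linarith [hmono, heval.symm.trans_le hmono]

lemma one_sub_Phi_pos (x : ℝ) : 0 < 1 - Phi x := by linarith [Phi_lt_one x]

lemma sqrt_two_pi_inv_ne : (Real.sqrt (2 * Real.pi))⁻¹ ≠ 0 := by positivity

lemma log_stdPdf (x : ℝ) :
    Real.log (stdPdf x) = Real.log (Real.sqrt (2 * Real.pi))⁻¹ - x ^ 2 / 2 := by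
  unfold stdPdf
  rw [Real.log_mul sqrt_two_pi_inv_ne (Real.exp_ne_zero _), Real.log_exp]
  ring

lemma log_tail_ub {x : ℝ} (hx : 0 < x) :
    Real.log (1 - Phi x) ≤ Real.log (Real.sqrt (2 * Real.pi))⁻¹ - x ^ 2 / 2 - Real.log x := by
  have h1 : Real.log (1 - Phi x) ≤ Real.log (stdPdf x / x) :=
    Real.log_le_log (one_sub_Phi_pos x) (tail_ub hx)
  rw [Real.log_div (stdPdf_pos x).ne' hx.ne', log_stdPdf] at h1
  linarith

lemma log_tail_lb {x : ℝ} (hx : 0 < x) :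
    Real.log (Real.sqrt (2 * Real.pi))⁻¹ - x ^ 2 / 2 + Real.log x - Real.log (x ^ 2 + 1)
      ≤ Real.log (1 - Phi x) := by
  have h0 : 0 < x * stdPdf x / (x ^ 2 + 1) := by
    have := stdPdf_pos x; positivity
  have h1 : Real.log (x * stdPdf x / (x ^ 2 + 1)) ≤ Real.log (1 - Phi x) :=
    Real.log_le_log h0 (tail_lb hx)
  rw [Real.log_div (by have := stdPdf_pos x; positivity) (by positivity),
    Real.log_mul hx.ne' (stdPdf_pos x).ne', log_stdPdf] at h1
  linarith

lemma Phi_tendsto : Tendsto Phi atTop (𝓝 1) := by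
  have hub : ∀ᶠ x in atTop, Phi x ≤ 1 := Eventually.of_forall fun x => (Phi_lt_one x).le
  have hlb : ∀ᶠ x in atTop, 1 - stdPdf x / x ≤ Phi x := by
    filter_upwards [eventually_gt_atTop (0:ℝ)] with x hx
    linarith [tail_ub hx]
  have hl : Tendsto (fun x : ℝ => 1 - stdPdf x / x) atTop (𝓝 1) := by
    have h : Tendsto (fun t : ℝ => stdPdf t / t) atTop (𝓝 0) := by
      have := stdPdf_tendsto.mul tendsto_inv_atTop_zero
      simpa [div_eq_mul_inv] using this
    have := tendsto_const_nhds.sub h (f := fun _ : ℝ => (1:ℝ))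
    simpa using this
  exact tendsto_of_tendsto_of_tendsto_of_le_of_le' hl tendsto_const_nhds hlb hub

lemma sqrt_tendsto_atTop : Tendsto Real.sqrt atTop atTop := by
  refine tendsto_atTop_atTop.mpr fun b => ⟨(max b 0) ^ 2, fun x hx => ?_⟩
  have h1 : Real.sqrt ((max b 0) ^ 2) ≤ Real.sqrt x := Real.sqrt_le_sqrt hx
  rw [Real.sqrt_sq (le_max_right b 0)] at h1
  exact (le_max_left b 0).trans h1

lemma ratio_lim1 (d : ℝ) :
    Tendsto (fun u : ℝ => u * (u + d) / (u ^ 2 + 1)) atTop (𝓝 1) := by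
  have hn : Tendsto (fun u : ℝ => 1 + d / u) atTop (𝓝 1) := by
    have h0 : Tendsto (fun u : ℝ => d * u⁻¹) atTop (𝓝 (d * 0)) :=
      (tendsto_inv_atTop_zero (𝕜 := ℝ)).const_mul d
    have := (tendsto_const_nhds (x := (1:ℝ)) (f := atTop)).add h0
    simpa [div_eq_mul_inv] using this
  have hden : Tendsto (fun u : ℝ => 1 + (u ^ 2)⁻¹) atTop (𝓝 1) := by
    have h2 : Tendsto (fun u : ℝ => (u ^ 2)⁻¹) atTop (𝓝 0) :=
      tendsto_inv_atTop_zero.comp (tendsto_pow_atTop two_ne_zero)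
    simpa using tendsto_const_nhds.add h2
  have h := hn.div hden one_ne_zero
  rw [div_one] at h
  refine h.congr' ?_
  filter_upwards [eventually_gt_atTop (0:ℝ)] with u hu
  simp only [Pi.div_apply]
  field_simp

lemma ratio_lim2 {d : ℝ} (hd : 0 ≤ d) :
    Tendsto (fun u : ℝ => ((u + d) ^ 2 + 1) / (u * (u + d))) atTop (𝓝 1) := by
  have hn : Tendsto (fun u : ℝ => 1 + d / u) atTop (𝓝 1) := by
    have h0 : Tendsto (fun u : ℝ => d * u⁻¹) atTop (𝓝 (d * 0)) :=
      (tendsto_inv_atTop_zero (𝕜 := ℝ)).const_mul d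
    have := (tendsto_const_nhds (x := (1:ℝ)) (f := atTop)).add h0
    simpa [div_eq_mul_inv] using this
  have h2 : Tendsto (fun u : ℝ => (u ^ 2)⁻¹) atTop (𝓝 0) :=
    tendsto_inv_atTop_zero.comp (tendsto_pow_atTop two_ne_zero)
  have h := ((hn.pow 2).add h2).div hn one_ne_zero
  norm_num at h
  refine h.congr' ?_
  filter_upwards [eventually_gt_atTop (0:ℝ)] with u hu
  have hud : 0 < u + d := by linarith
  simp only [Pi.div_apply]
  field_simp


lemma logit_one_sub_Phi (x : ℝ) :
    logit (1 - Phi x) = Real.log (1 - Phi x) - Real.log (Phi x) := by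
  unfold logit
  rw [sub_sub_cancel]

lemma core_lb {x1 x2 : ℝ} (h1 : 0 < x1) (h2 : 0 < x2) :
    Real.log (x1 * x2 / (x1 ^ 2 + 1)) + (Real.log (Phi x2) - Real.log (Phi x1))
      ≤ (logit (1 - Phi x1) - logit (1 - Phi x2)) - (x2 ^ 2 / 2 - x1 ^ 2 / 2) := by
  rw [logit_one_sub_Phi, logit_one_sub_Phi,
    Real.log_div (by positivity) (by positivity), Real.log_mul h1.ne' h2.ne']
  linarith [log_tail_ub h2, log_tail_lb h1]

lemma core_ub {x1 x2 : ℝ} (h1 : 0 < x1) (h2 : 0 < x2) :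
    (logit (1 - Phi x1) - logit (1 - Phi x2)) - (x2 ^ 2 / 2 - x1 ^ 2 / 2)
      ≤ Real.log ((x2 ^ 2 + 1) / (x1 * x2)) + (Real.log (Phi x2) - Real.log (Phi x1)) := by
  rw [logit_one_sub_Phi, logit_one_sub_Phi,
    Real.log_div (by positivity) (by positivity), Real.log_mul h1.ne' h2.ne']
  linarith [log_tail_ub h1, log_tail_lb h2]

theorem stmt17 (a b1 b2 : ℝ) (ha : 0 < a) (hb : b1 ≤ b2) :
    (∀ n : ℝ, 0 < n →
      logit (1 - Phi (a * Real.sqrt n + b2)) ≤ logit (1 - Phi (a * Real.sqrt n + b1))) ∧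
    Filter.Tendsto
      (fun n : ℝ =>
        (logit (1 - Phi (a * Real.sqrt n + b1)) - logit (1 - Phi (a * Real.sqrt n + b2)))
          / Real.sqrt n)
      Filter.atTop (nhds (a * (b2 - b1))) := by
  have hd : 0 ≤ b2 - b1 := by linarith
  constructor
  · intro n hn
    have h12 : a * Real.sqrt n + b1 ≤ a * Real.sqrt n + b2 := by linarith
    have hm := Phi_mono h12
    have h1 := Phi_pos (a * Real.sqrt n + b1)
    have h4 := Phi_lt_one (a * Real.sqrt n + b2)
    rw [logit_one_sub_Phi, logit_one_sub_Phi]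
    have l1 : Real.log (1 - Phi (a * Real.sqrt n + b2))
        ≤ Real.log (1 - Phi (a * Real.sqrt n + b1)) :=
      Real.log_le_log (by linarith) (by linarith)
    have l2 : Real.log (Phi (a * Real.sqrt n + b1))
        ≤ Real.log (Phi (a * Real.sqrt n + b2)) := Real.log_le_log h1 hm
    linarith
  -- limit part
  have hx1top : Tendsto (fun n : ℝ => a * Real.sqrt n + b1) atTop atTop :=
    tendsto_atTop_add_const_right _ b1 (sqrt_tendsto_atTop.const_mul_atTop ha)
  have hx2top : Tendsto (fun n : ℝ => a * Real.sqrt n + b2) atTop atTop :=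
    tendsto_atTop_add_const_right _ b2 (sqrt_tendsto_atTop.const_mul_atTop ha)
  -- the B term
  have hlogPhi : ∀ f : ℝ → ℝ, Tendsto f atTop atTop →
      Tendsto (fun n => Real.log (Phi (f n))) atTop (𝓝 0) := by
    intro f hf
    have := (Real.continuousAt_log one_ne_zero).tendsto.comp (Phi_tendsto.comp hf)
    simpa [Function.comp_def] using this
  have hB : Tendsto (fun n : ℝ =>
      Real.log (Phi (a * Real.sqrt n + b2)) - Real.log (Phi (a * Real.sqrt n + b1)))
      atTop (𝓝 0) := by
    have := (hlogPhi _ hx2top).sub (hlogPhi _ hx1top)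
    simpa using this
  -- log ratio limits
  have hR1 : Tendsto (fun n : ℝ =>
      Real.log ((a * Real.sqrt n + b1) * ((a * Real.sqrt n + b1) + (b2 - b1))
        / ((a * Real.sqrt n + b1) ^ 2 + 1))) atTop (𝓝 0) := by
    have h0 := Real.log_one ▸ ((Real.continuousAt_log one_ne_zero).tendsto.comp
      (ratio_lim1 (b2 - b1))).comp hx1top
    exact h0.congr fun n => rfl
  have hR2 : Tendsto (fun n : ℝ =>
      Real.log ((((a * Real.sqrt n + b1) + (b2 - b1)) ^ 2 + 1)
        / ((a * Real.sqrt n + b1) * ((a * Real.sqrt n + b1) + (b2 - b1))))) atTop (𝓝 0) := by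
    have h0 := Real.log_one ▸ ((Real.continuousAt_log one_ne_zero).tendsto.comp
      (ratio_lim2 hd)).comp hx1top
    exact h0.congr fun n => rfl
  -- squeeze for E
  have hElim : Tendsto (fun n : ℝ =>
      (logit (1 - Phi (a * Real.sqrt n + b1)) - logit (1 - Phi (a * Real.sqrt n + b2)))
        - a * (b2 - b1) * Real.sqrt n) atTop (𝓝 ((b2 ^ 2 - b1 ^ 2) / 2)) := by
    have hLo : Tendsto (fun n : ℝ => (b2 ^ 2 - b1 ^ 2) / 2 +
        Real.log ((a * Real.sqrt n + b1) * ((a * Real.sqrt n + b1) + (b2 - b1))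
          / ((a * Real.sqrt n + b1) ^ 2 + 1)) +
        (Real.log (Phi (a * Real.sqrt n + b2)) - Real.log (Phi (a * Real.sqrt n + b1))))
        atTop (𝓝 ((b2 ^ 2 - b1 ^ 2) / 2)) := by
      have := ((tendsto_const_nhds (x := (b2 ^ 2 - b1 ^ 2) / 2) (f := atTop)).add hR1).add hB
      simpa using this
    have hHi : Tendsto (fun n : ℝ => (b2 ^ 2 - b1 ^ 2) / 2 +
        Real.log ((((a * Real.sqrt n + b1) + (b2 - b1)) ^ 2 + 1)
          / ((a * Real.sqrt n + b1) * ((a * Real.sqrt n + b1) + (b2 - b1)))) +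
        (Real.log (Phi (a * Real.sqrt n + b2)) - Real.log (Phi (a * Real.sqrt n + b1))))
        atTop (𝓝 ((b2 ^ 2 - b1 ^ 2) / 2)) := by
      have := ((tendsto_const_nhds (x := (b2 ^ 2 - b1 ^ 2) / 2) (f := atTop)).add hR2).add hB
      simpa using this
    refine tendsto_of_tendsto_of_tendsto_of_le_of_le' hLo hHi ?_ ?_
    · filter_upwards [hx1top.eventually (eventually_gt_atTop (0:ℝ))] with n hx1pos
      have hx2pos : 0 < (a * Real.sqrt n + b1) + (b2 - b1) := by linarith
      have hcore := core_lb hx1pos hx2pos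
      have heq : (a * Real.sqrt n + b1) + (b2 - b1) = a * Real.sqrt n + b2 := by ring
      rw [heq] at hcore hx2pos
      have hsq : (a * Real.sqrt n + b2) ^ 2 / 2 - (a * Real.sqrt n + b1) ^ 2 / 2
          = a * (b2 - b1) * Real.sqrt n + (b2 ^ 2 - b1 ^ 2) / 2 := by ring
      rw [heq]
      linarith [hcore, hsq.le, hsq.ge]
    · filter_upwards [hx1top.eventually (eventually_gt_atTop (0:ℝ))] with n hx1pos
      have hx2pos : 0 < (a * Real.sqrt n + b1) + (b2 - b1) := by linarith
      have hcore := core_ub hx1pos hx2pos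
      have heq : (a * Real.sqrt n + b1) + (b2 - b1) = a * Real.sqrt n + b2 := by ring
      rw [heq] at hcore hx2pos
      have hsq : (a * Real.sqrt n + b2) ^ 2 / 2 - (a * Real.sqrt n + b1) ^ 2 / 2
          = a * (b2 - b1) * Real.sqrt n + (b2 ^ 2 - b1 ^ 2) / 2 := by ring
      rw [heq]
      linarith [hcore, hsq.le, hsq.ge]
  -- conclude
  have hinv : Tendsto (fun n : ℝ => (Real.sqrt n)⁻¹) atTop (𝓝 0) :=
    tendsto_inv_atTop_zero.comp sqrt_tendsto_atTop
  have hEdiv := hElim.mul hinv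
  rw [mul_zero] at hEdiv
  have hfinal : Tendsto (fun n : ℝ => a * (b2 - b1) +
      ((logit (1 - Phi (a * Real.sqrt n + b1)) - logit (1 - Phi (a * Real.sqrt n + b2)))
        - a * (b2 - b1) * Real.sqrt n) * (Real.sqrt n)⁻¹) atTop (𝓝 (a * (b2 - b1))) := by
    have := (tendsto_const_nhds (x := a * (b2 - b1)) (f := atTop)).add hEdiv
    simpa using this
  refine hfinal.congr' ?_
  filter_upwards [eventually_gt_atTop (0:ℝ)] with n hn
  have hsn : (0:ℝ) < Real.sqrt n := Real.sqrt_pos.mpr hn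
  field_simp
  ring
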